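/- Consider the LSTM recursion f_t = σ(W_f h_{t−1} + U_f x_t), i_t = σ(W_i h_{t−1} + U_i x_t), o_t = σ(W_o h_{t−1} + U_o x_t), z_t = tanh(W_z h_{t−1} + U_z x_t), c_t = i_t ∘ z_t + f_t ∘ c_{t−1}, h_t = o_t ∘ tanh(c_t), with initial state c_0 = h_0 = 0. Suppose ‖W_f‖_∞ ≤ B_W < ∞, ‖U_f‖_∞ ≤ B_U < ∞, and all inputs satisfy ‖x_t‖_∞ ≤ B_x. Then: (i) ‖h_t‖_∞ ≤ 1 for all t; (ii) ‖f_t‖_∞ ≤ σ(B_W + B_U B_x) < 1 for all t, so f_∞ := sup_t ‖f_t‖_∞ < 1; and (iii) ‖c_t‖_∞ ≤ 1/(1 − f_∞) for all t. -/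

import Mathlib

/-- The logistic sigmoid `σ(z) = 1/(1 + e^{−z})`. -/
noncomputable def sigmoid (z : ℝ) : ℝ := 1 / (1 + Real.exp (-z))

lemma sigmoid_pos (z : ℝ) : 0 < sigmoid z := by unfold sigmoid; positivity

lemma sigmoid_lt_one (z : ℝ) : sigmoid z < 1 := by
  unfold sigmoid
  rw [div_lt_one (by positivity)]
  linarith [Real.exp_pos (-z)]

lemma sigmoid_mono {a b : ℝ} (hab : a ≤ b) : sigmoid a ≤ sigmoid b := by
  unfold sigmoid
  apply one_div_le_one_div_of_le (by positivity)
  have := Real.exp_le_exp.mpr (neg_le_neg hab)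
  linarith

lemma abs_sigmoid_le (a b : ℝ) (hab : |a| ≤ b) : |sigmoid a| ≤ sigmoid b := by
  rw [abs_of_pos (sigmoid_pos a)]
  exact sigmoid_mono (le_trans (le_abs_self a) hab)

lemma abs_tanh_le_one (x : ℝ) : |Real.tanh x| ≤ 1 := by
  rw [Real.tanh_eq_sinh_div_cosh, abs_div, Real.abs_sinh,
    abs_of_pos (Real.cosh_pos x), ← Real.cosh_abs]
  exact div_le_one_of_le₀ (Real.sinh_lt_cosh _).le (Real.cosh_pos _).le

lemma mulVec_bound {d n : ℕ} (W : Matrix (Fin d) (Fin n) ℝ) (v : Fin n → ℝ) (B C : ℝ)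
    (hC : 0 ≤ C) (hW : ∀ j, ∑ l, |W j l| ≤ B) (hv : ‖v‖ ≤ C) (j : Fin d) :
    |W.mulVec v j| ≤ B * C := by
  have hvl : ∀ l, |v l| ≤ C := fun l => by
    have := norm_le_pi_norm v l
    rw [Real.norm_eq_abs] at this
    exact this.trans hv
  rw [Matrix.mulVec, dotProduct]
  calc |∑ l, W j l * v l| ≤ ∑ l, |W j l * v l| := Finset.abs_sum_le_sum_abs _ _
    _ ≤ ∑ l, |W j l| * C := by
        apply Finset.sum_le_sum; intro l _
        rw [abs_mul]
        exact mul_le_mul_of_nonneg_left (hvl l) (abs_nonneg _)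
    _ = (∑ l, |W j l|) * C := (Finset.sum_mul _ _ _).symm
    _ ≤ B * C := mul_le_mul_of_nonneg_right (hW j) hC

/-- For the LSTM recursion with `c_0 = h_0 = 0`, if the forget-gate
matrices have induced `ℓ∞` norms (max absolute row sums) bounded by
`B_W` and `B_U` and all inputs satisfy `‖x_t‖_∞ ≤ B_x`, then
(i) `‖h_t‖_∞ ≤ 1`, (ii) `‖f_t‖_∞ ≤ σ(B_W + B_U B_x) < 1` so
`f_∞ := sup_t ‖f_t‖_∞ < 1`, and (iii) `‖c_t‖_∞ ≤ 1/(1 − f_∞)`.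
Vectors in `Fin dd → ℝ` carry the sup (`ℓ∞`) norm. -/
theorem stmt_3 (dd nn : ℕ) (BW BU Bx : ℝ)
    (Wf Wi Wo Wz : Matrix (Fin dd) (Fin dd) ℝ)
    (Uf Ui Uo Uz : Matrix (Fin dd) (Fin nn) ℝ)
    (hWf : ∀ j, ∑ l, |Wf j l| ≤ BW)          -- ‖W_f‖_∞ ≤ B_W
    (hUf : ∀ j, ∑ l, |Uf j l| ≤ BU)          -- ‖U_f‖_∞ ≤ B_U
    (x : ℕ → (Fin nn → ℝ)) (hx : ∀ t, ‖x t‖ ≤ Bx)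
    (f i o z c h : ℕ → (Fin dd → ℝ))
    (hc0 : c 0 = 0) (hh0 : h 0 = 0)
    (hf : ∀ t, f (t + 1) = fun j => sigmoid ((Wf.mulVec (h t) + Uf.mulVec (x (t + 1))) j))
    (hi : ∀ t, i (t + 1) = fun j => sigmoid ((Wi.mulVec (h t) + Ui.mulVec (x (t + 1))) j))
    (ho : ∀ t, o (t + 1) = fun j => sigmoid ((Wo.mulVec (h t) + Uo.mulVec (x (t + 1))) j))
    (hz : ∀ t, z (t + 1) = fun j => Real.tanh ((Wz.mulVec (h t) + Uz.mulVec (x (t + 1))) j))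
    (hc : ∀ t, c (t + 1) = i (t + 1) * z (t + 1) + f (t + 1) * c t)
    (hh : ∀ t, h (t + 1) = o (t + 1) * fun j => Real.tanh (c (t + 1) j)) :
    (∀ t, ‖h t‖ ≤ 1) ∧
    ((∀ t, ‖f (t + 1)‖ ≤ sigmoid (BW + BU * Bx)) ∧ sigmoid (BW + BU * Bx) < 1) ∧
    ((⨆ t, ‖f (t + 1)‖) < 1 ∧ ∀ t, ‖c t‖ ≤ 1 / (1 - ⨆ t, ‖f (t + 1)‖)) := by
  have hBx : 0 ≤ Bx := le_trans (norm_nonneg _) (hx 0)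
  -- (i) ‖h t‖ ≤ 1
  have hh1 : ∀ t, ‖h t‖ ≤ 1 := by
    intro t
    cases t with
    | zero => simp [hh0]
    | succ t =>
      rw [hh t, pi_norm_le_iff_of_nonneg zero_le_one]
      intro j
      rw [Pi.mul_apply, Real.norm_eq_abs, abs_mul]
      have h1 : |o (t + 1) j| ≤ 1 := by
        rw [ho t]
        rw [abs_of_pos (sigmoid_pos _)]
        exact (sigmoid_lt_one _).le
      have h2 : |Real.tanh (c (t + 1) j)| ≤ 1 := abs_tanh_le_one _
      calc |o (t + 1) j| * |Real.tanh (c (t + 1) j)| ≤ 1 * 1 :=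
            mul_le_mul h1 h2 (abs_nonneg _) zero_le_one
        _ = 1 := one_mul 1
  -- (ii) forget-gate bound
  have hfb : ∀ t, ‖f (t + 1)‖ ≤ sigmoid (BW + BU * Bx) := by
    intro t
    rw [hf t, pi_norm_le_iff_of_nonneg (sigmoid_pos _).le]
    intro j
    rw [Real.norm_eq_abs]
    apply abs_sigmoid_le
    rw [Pi.add_apply]
    calc |Wf.mulVec (h t) j + Uf.mulVec (x (t + 1)) j|
        ≤ |Wf.mulVec (h t) j| + |Uf.mulVec (x (t + 1)) j| := abs_add_le _ _
      _ ≤ BW * 1 + BU * Bx :=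
          add_le_add (mulVec_bound Wf (h t) BW 1 zero_le_one hWf (hh1 t) j)
            (mulVec_bound Uf (x (t + 1)) BU Bx hBx hUf (hx (t + 1)) j)
      _ = BW + BU * Bx := by ring
  have hslt : sigmoid (BW + BU * Bx) < 1 := sigmoid_lt_one _
  -- the supremum
  have hbdd : BddAbove (Set.range fun t => ‖f (t + 1)‖) := by
    refine ⟨sigmoid (BW + BU * Bx), ?_⟩
    rintro _ ⟨t, rfl⟩
    exact hfb t
  set F := ⨆ t, ‖f (t + 1)‖ with hF
  have hFle : F ≤ sigmoid (BW + BU * Bx) := ciSup_le hfb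
  have hFlt : F < 1 := lt_of_le_of_lt hFle hslt
  have hF0 : 0 ≤ F := le_trans (norm_nonneg (f 1)) (le_ciSup hbdd 0)
  have h1F : 0 < 1 - F := by linarith
  refine ⟨hh1, ⟨hfb, hslt⟩, hFlt, ?_⟩
  -- (iii) cell-state bound by induction
  intro t
  induction t with
  | zero => simp only [hc0]; rw [norm_zero]; exact div_nonneg zero_le_one h1F.le
  | succ t ih =>
    have hcC : 0 ≤ 1 / (1 - F) := by positivity
    rw [hc t, pi_norm_le_iff_of_nonneg hcC]
    intro j
    rw [Pi.add_apply, Pi.mul_apply, Pi.mul_apply, Real.norm_eq_abs]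
    have hiz : |i (t + 1) j * z (t + 1) j| ≤ 1 := by
      rw [abs_mul]
      have h1 : |i (t + 1) j| ≤ 1 := by
        rw [hi t, abs_of_pos (sigmoid_pos _)]
        exact (sigmoid_lt_one _).le
      have h2 : |z (t + 1) j| ≤ 1 := by rw [hz t]; exact abs_tanh_le_one _
      calc |i (t + 1) j| * |z (t + 1) j| ≤ 1 * 1 :=
            mul_le_mul h1 h2 (abs_nonneg _) zero_le_one
        _ = 1 := one_mul 1
    have hfj : |f (t + 1) j| ≤ F := by
      have := norm_le_pi_norm (f (t + 1)) j
      rw [Real.norm_eq_abs] at this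
      exact this.trans (le_ciSup hbdd t)
    have hcj : |c t j| ≤ 1 / (1 - F) := by
      have := norm_le_pi_norm (c t) j
      rw [Real.norm_eq_abs] at this
      exact this.trans ih
    have hfc : |f (t + 1) j * c t j| ≤ F * (1 / (1 - F)) := by
      rw [abs_mul]
      exact mul_le_mul hfj hcj (abs_nonneg _) hF0
    have key : 1 + F * (1 / (1 - F)) = 1 / (1 - F) := by
      field_simp
      ring
    calc |i (t + 1) j * z (t + 1) j + f (t + 1) j * c t j|
        ≤ |i (t + 1) j * z (t + 1) j| + |f (t + 1) j * c t j| := abs_add_le _ _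
      _ ≤ 1 + F * (1 / (1 - F)) := add_le_add hiz hfc
      _ = 1 / (1 - F) := key
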